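/- Let Θ be a smooth symmetric d-multilinear form on an n-dimensional ℂ-vector space V. Then the center Z(V,Θ) is isomorphic as a ℂ-algebra to ℂ × ⋯ × ℂ (dim Z(V,Θ) copies), and dim Z(V,Θ) ≤ n. Moreover, (V,Θ) is diagonalizable (there exists a basis β₁,…,βₙ of V with Θ(β_{j₁},…,β_{j_d}) = 0 unless j₁ = ⋯ = j_d) if and only if dim Z(V,Θ) = n. -/

import Mathlib

open Module
set_option maxHeartbeats 1000000
set_option synthInstance.maxHeartbeats 400000

lemma aux_sq_zero {R : Type*} [MonoidWithZero R] (h : ∀ x : R, x * x = 0 → x = 0) :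
    ∀ (k : ℕ) (x : R), x ^ k = 0 → x = 0 := by
  intro k
  induction k using Nat.strong_induction_on with
  | _ k ih =>
    intro x hx
    match k, hx with
    | 0, hx =>
      have h1 : (1 : R) = 0 := by simpa using hx
      exact h x (by rw [← mul_one (x*x), h1, mul_zero])
    | 1, hx => simpa using hx
    | (k+2), hx =>
      have hm : x ^ ((k+2+1)/2) = 0 := by
        apply h
        rw [← pow_add]
        have h2 : (k+2+1)/2 + (k+2+1)/2 = (k+2) + ((k+2+1)/2 + (k+2+1)/2 - (k+2)) := by omega
        rw [h2, pow_add, hx, zero_mul]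
      exact ih ((k+2+1)/2) (by omega) x hm

lemma aux_pi_equiv (A : Type*) [CommRing A] [Algebra ℂ A] [FiniteDimensional ℂ A]
    [IsReduced A] : Nonempty (A ≃ₐ[ℂ] (Fin (finrank ℂ A) → ℂ)) := by
  haveI : IsArtinianRing A := isArtinian_of_tower ℂ inferInstance
  haveI := (IsArtinianRing.setOfPred_isMaximal_finite A).to_subtype
  set ι := {I : Ideal A | I.IsMaximal} with hι
  haveI : Fintype ι := Fintype.ofFinite _
  haveI : ∀ I : ι, I.1.IsPrime := fun I => I.2.isPrime
  let g : A →ₐ[ℂ] (∀ I : ι, A ⧸ I.1) := Pi.algHom ℂ _ (fun I => Ideal.Quotient.mkₐ ℂ I.1)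
  have hginj : Function.Injective g := by
    rw [injective_iff_map_eq_zero]
    intro x hx
    have hmem : ∀ I : ι, x ∈ I.1 := by
      intro I
      have := congrFun hx I
      simpa [g, Ideal.Quotient.eq_zero_iff_mem] using this
    have : IsNilpotent x := by
      rw [nilpotent_iff_mem_prime]
      intro J hJ
      exact hmem ⟨J, (IsArtinianRing.isPrime_iff_isMaximal J).mp hJ⟩
    exact this.eq_zero
  have hgsurj : Function.Surjective g := by
    intro y
    obtain ⟨r, hr⟩ := Ideal.pi_quotient_surjective
      (I := fun I : ι => I.1) (fun I J h => Ideal.isCoprime_iff_sup_eq.mpr <|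
        I.2.coprime_of_ne J.2 (by rwa [Ne, Subtype.coe_inj])) y
    exact ⟨r, funext fun I => hr I⟩
  have : ∀ I : ι, Nonempty ((A ⧸ I.1) ≃ₐ[ℂ] ℂ) := by
    intro I
    haveI : FiniteDimensional ℂ (A ⧸ I.1) := Module.Finite.of_surjective
      (Ideal.Quotient.mkₐ ℂ I.1).toLinearMap (Ideal.Quotient.mk_surjective)
    have hbij : Function.Bijective (algebraMap ℂ (A ⧸ I.1)) := by
      constructor
      · exact (algebraMap ℂ (A ⧸ I.1)).injective
      · exact IsAlgClosed.algebraMap_bijective_of_isIntegral.2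
    exact ⟨(AlgEquiv.ofBijective (Algebra.ofId ℂ _) hbij).symm⟩
  let eI : ∀ I : ι, (A ⧸ I.1) ≃ₐ[ℂ] ℂ := fun I => (this I).some
  let e1 : A ≃ₐ[ℂ] (∀ I : ι, A ⧸ I.1) := AlgEquiv.ofBijective g ⟨hginj, hgsurj⟩
  let e2 : (∀ I : ι, A ⧸ I.1) ≃ₐ[ℂ] (ι → ℂ) := AlgEquiv.piCongrRight eI
  have hcard : Fintype.card ι = finrank ℂ A := by
    have h1 : finrank ℂ A = finrank ℂ (ι → ℂ) :=
      ((e1.trans e2).toLinearEquiv).finrank_eq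
    rw [h1, finrank_pi]
  let σ : ι ≃ Fin (finrank ℂ A) := Fintype.equivFinOfCardEq hcard
  let e3 : (ι → ℂ) ≃ₐ[ℂ] (Fin (finrank ℂ A) → ℂ) :=
    AlgEquiv.ofRingEquiv (f := RingEquiv.piCongrLeft' (fun _ => ℂ) σ) (fun x => rfl)
  exact ⟨(e1.trans e2).trans e3⟩

/-- Let `Θ` be a smooth symmetric `d`-multilinear form on an `n`-dimensional
`ℂ`-vector space `V`. Then the center `Z(V,Θ)` is isomorphic as a `ℂ`-algebra to
`ℂ × ⋯ × ℂ` (`dim Z(V,Θ)` copies), `dim Z(V,Θ) ≤ n`, and `(V,Θ)` is diagonalizable iff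
`dim Z(V,Θ) = n`. -/
theorem stmt_14 {V : Type*} [AddCommGroup V] [Module ℂ V] [FiniteDimensional ℂ V]
    {d n : ℕ} (hd : 3 ≤ d) (hn : Module.finrank ℂ V = n)
    (Θ : MultilinearMap ℂ (fun _ : Fin d => V) ℂ)
    (hsymm : ∀ (σ : Equiv.Perm (Fin d)) (v : Fin d → V), Θ (v ∘ σ) = Θ v)
    (hsmooth : ∀ u : V,
      (∀ w : V, Θ (Function.update (fun _ => u) ⟨d - 1, by omega⟩ w) = 0) → u = 0)
    (ZS : Submodule ℂ (Module.End ℂ V))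
    (hZS : ∀ φ : Module.End ℂ V, φ ∈ ZS ↔ ∀ v : Fin d → V,
      Θ (Function.update v ⟨0, by omega⟩ (φ (v ⟨0, by omega⟩)))
        = Θ (Function.update v ⟨1, by omega⟩ (φ (v ⟨1, by omega⟩)))) :
    (∃ F : Module.End ℂ V → (Fin (Module.finrank ℂ ↥ZS) → ℂ),
        Set.BijOn F (ZS : Set (Module.End ℂ V)) Set.univ ∧
        (∀ φ ∈ ZS, ∀ ψ ∈ ZS, F (φ + ψ) = F φ + F ψ) ∧
        (∀ c : ℂ, ∀ φ ∈ ZS, F (c • φ) = c • F φ) ∧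
        (∀ φ ∈ ZS, ∀ ψ ∈ ZS, F (φ * ψ) = F φ * F ψ) ∧
        F 1 = 1) ∧
    Module.finrank ℂ ↥ZS ≤ n ∧
    ((∃ β : Basis (Fin n) ℂ V, ∀ j : Fin d → Fin n,
        (¬ ∀ s s' : Fin d, j s = j s') → Θ (fun s => β (j s)) = 0)
      ↔ Module.finrank ℂ ↥ZS = n) := by
  classical
  have h01 : (⟨0, by omega⟩ : Fin d) ≠ ⟨1, by omega⟩ := Fin.ne_of_val_ne (by simp)
  have h02 : (⟨0, by omega⟩ : Fin d) ≠ ⟨2, by omega⟩ := Fin.ne_of_val_ne (by simp)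
  have h12 : (⟨1, by omega⟩ : Fin d) ≠ ⟨2, by omega⟩ := Fin.ne_of_val_ne (by simp)
  have h0l : (⟨0, by omega⟩ : Fin d) ≠ ⟨d - 1, by omega⟩ := Fin.ne_of_val_ne (by simp; omega)
  have h1l : (⟨1, by omega⟩ : Fin d) ≠ ⟨d - 1, by omega⟩ := Fin.ne_of_val_ne (by simp; omega)
  have hcen : ∀ φ ∈ ZS, ∀ v : Fin d → V,
      Θ (Function.update v ⟨0, by omega⟩ (φ (v ⟨0, by omega⟩)))
        = Θ (Function.update v ⟨1, by omega⟩ (φ (v ⟨1, by omega⟩))) :=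
    fun φ hφ v => (hZS φ).mp hφ v
  -- moving an element of the center between two arbitrary slots
  have hmove : ∀ φ ∈ ZS, ∀ s s' : Fin d, s ≠ s' → ∀ v : Fin d → V,
      Θ (Function.update v s (φ (v s))) = Θ (Function.update v s' (φ (v s'))) := by
    intro φ hφ s s' hss v
    set j0 : Fin d := ⟨0, by omega⟩ with hj0
    set j1 : Fin d := ⟨1, by omega⟩ with hj1
    set t : Fin d := Equiv.swap j0 s s' with ht
    have hswapt : Equiv.swap j0 s t = s' := Equiv.swap_apply_self _ _ _
    have hti0 : t ≠ j0 := by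
      intro h
      rw [h, Equiv.swap_apply_left] at hswapt
      exact hss hswapt
    set σ : Equiv.Perm (Fin d) := (Equiv.swap j1 t).trans (Equiv.swap j0 s) with hσ
    have hσ0 : σ j0 = s := by
      have h1 : Equiv.swap j1 t j0 = j0 :=
        Equiv.swap_apply_of_ne_of_ne h01 (Ne.symm hti0)
      simp [hσ, Equiv.trans_apply, h1, Equiv.swap_apply_left]
    have hσ1 : σ j1 = s' := by
      simp [hσ, Equiv.trans_apply, Equiv.swap_apply_left, hswapt]
    have hs0 : σ.symm s = j0 := by rw [Equiv.symm_apply_eq, hσ0]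
    have hs1 : σ.symm s' = j1 := by rw [Equiv.symm_apply_eq, hσ1]
    calc Θ (Function.update v s (φ (v s)))
        = Θ ((Function.update v s (φ (v s))) ∘ σ) := (hsymm σ _).symm
      _ = Θ (Function.update (v ∘ σ) j0 (φ ((v ∘ σ) j0))) := by
            rw [Function.update_comp_equiv, hs0]
            congr 2
            simp [Function.comp, hσ0]
      _ = Θ (Function.update (v ∘ σ) j1 (φ ((v ∘ σ) j1))) := hcen φ hφ (v ∘ σ)
      _ = Θ ((Function.update v s' (φ (v s'))) ∘ σ) := by
            rw [Function.update_comp_equiv, hs1]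
            congr 2
            simp [Function.comp, hσ1]
      _ = Θ (Function.update v s' (φ (v s'))) := hsymm σ _
  -- nondegeneracy
  have hzero : ∀ u : V,
      (∀ v : Fin d → V, Θ (Function.update v ⟨0, by omega⟩ u) = 0) → u = 0 := by
    intro u hu
    apply hsmooth u
    intro w
    have h1 : Function.update (fun _ => u) (⟨d - 1, by omega⟩ : Fin d) w
        = Function.update (Function.update (fun _ => u) ⟨d - 1, by omega⟩ w)
            ⟨0, by omega⟩ u := by
      funext x
      by_cases hx : x = (⟨0, by omega⟩ : Fin d)
      · subst hx
        rw [Function.update_self, Function.update_of_ne h0l]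
      · rw [Function.update_of_ne hx]
    rw [h1]
    exact hu _
  have h1mem : (1 : Module.End ℂ V) ∈ ZS := by
    rw [hZS]
    intro v
    rw [Module.End.one_apply, Module.End.one_apply, Function.update_eq_self,
      Function.update_eq_self]
  have hmulmem : ∀ φ ∈ ZS, ∀ ψ ∈ ZS, φ * ψ ∈ ZS := by
    intro φ hφ ψ hψ
    rw [hZS]
    intro v
    set j0 : Fin d := ⟨0, by omega⟩ with hj0
    set j1 : Fin d := ⟨1, by omega⟩ with hj1
    set j2 : Fin d := ⟨2, by omega⟩ with hj2
    set A : Fin d → V := Function.update v j0 (ψ (v j0)) with hA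
    set B : Fin d → V := Function.update v j2 (φ (v j2)) with hB
    set C : Fin d → V := Function.update v j1 (ψ (v j1)) with hC
    have hAj2 : A j2 = v j2 := Function.update_of_ne (Ne.symm h02) _ v
    have hBj1 : B j1 = v j1 := Function.update_of_ne h12 _ v
    have hCj2 : C j2 = v j2 := Function.update_of_ne (Ne.symm h12) _ v
    calc Θ (Function.update v j0 ((φ * ψ) (v j0)))
        = Θ (Function.update A j0 (φ (A j0))) := by
          rw [hA, Function.update_self, Function.update_idem, Module.End.mul_apply]
      _ = Θ (Function.update A j2 (φ (A j2))) := hmove φ hφ j0 j2 h02 A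
      _ = Θ (Function.update B j0 (ψ (B j0))) := by
          have hBj0 : B j0 = v j0 := Function.update_of_ne h02 _ v
          rw [hAj2, hBj0, hA, hB, Function.update_comm h02]
      _ = Θ (Function.update B j1 (ψ (B j1))) := hcen ψ hψ B
      _ = Θ (Function.update C j2 (φ (C j2))) := by
          rw [hBj1, hCj2, hB, hC, Function.update_comm (Ne.symm h12)]
      _ = Θ (Function.update C j1 (φ (C j1))) := hmove φ hφ j2 j1 (Ne.symm h12) C
      _ = Θ (Function.update v j1 ((φ * ψ) (v j1))) := by
          rw [hC, Function.update_self, Function.update_idem, Module.End.mul_apply]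
  -- key commutation identity
  have hK : ∀ φ ∈ ZS, ∀ ψ ∈ ZS, ∀ v : Fin d → V,
      Θ (Function.update v ⟨0, by omega⟩ ((φ * ψ) (v ⟨0, by omega⟩)))
        = Θ (Function.update (Function.update v ⟨1, by omega⟩
            (φ (v ⟨1, by omega⟩))) ⟨2, by omega⟩ (ψ (v ⟨2, by omega⟩))) := by
    intro φ hφ ψ hψ v
    set j0 : Fin d := ⟨0, by omega⟩ with hj0
    set j1 : Fin d := ⟨1, by omega⟩ with hj1
    set j2 : Fin d := ⟨2, by omega⟩ with hj2
    set A : Fin d → V := Function.update v j0 (ψ (v j0)) with hA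
    set B : Fin d → V := Function.update v j1 (φ (v j1)) with hB
    have hAj1 : A j1 = v j1 := Function.update_of_ne (Ne.symm h01) _ v
    have hBj0 : B j0 = v j0 := Function.update_of_ne h01 _ v
    have hBj2 : B j2 = v j2 := Function.update_of_ne (Ne.symm h12) _ v
    calc Θ (Function.update v j0 ((φ * ψ) (v j0)))
        = Θ (Function.update A j0 (φ (A j0))) := by
          rw [hA, Function.update_self, Function.update_idem, Module.End.mul_apply]
      _ = Θ (Function.update A j1 (φ (A j1))) := hcen φ hφ A
      _ = Θ (Function.update B j0 (ψ (B j0))) := by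
          rw [hAj1, hBj0, hA, hB, Function.update_comm h01]
      _ = Θ (Function.update B j2 (ψ (B j2))) := hmove ψ hψ j0 j2 h02 B
      _ = Θ (Function.update B j2 (ψ (v j2))) := by rw [hBj2]
  have hcomm : ∀ φ ∈ ZS, ∀ ψ ∈ ZS, φ * ψ = ψ * φ := by
    intro φ hφ ψ hψ
    have hmain : ∀ v : Fin d → V,
        Θ (Function.update v ⟨0, by omega⟩ ((φ * ψ) (v ⟨0, by omega⟩)))
          = Θ (Function.update v ⟨0, by omega⟩ ((ψ * φ) (v ⟨0, by omega⟩))) := by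
      intro v
      set j0 : Fin d := ⟨0, by omega⟩ with hj0
      set j1 : Fin d := ⟨1, by omega⟩ with hj1
      set j2 : Fin d := ⟨2, by omega⟩ with hj2
      set σ : Equiv.Perm (Fin d) := Equiv.swap j1 j2 with hσ
      have hσ0 : σ j0 = j0 := Equiv.swap_apply_of_ne_of_ne h01 h02
      have hσ1 : σ j1 = j2 := Equiv.swap_apply_left _ _
      have hσ2 : σ j2 = j1 := Equiv.swap_apply_right _ _
      set w : Fin d → V := v ∘ σ with hw
      have hw0 : w j0 = v j0 := by rw [hw]; simp [Function.comp, hσ0]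
      have hw1 : w j1 = v j2 := by rw [hw]; simp [Function.comp, hσ1]
      have hw2 : w j2 = v j1 := by rw [hw]; simp [Function.comp, hσ2]
      have hcompat : Function.update (Function.update w j1 (ψ (w j1))) j2 (φ (w j2))
          = (Function.update (Function.update v j1 (φ (v j1))) j2 (ψ (v j2))) ∘ σ := by
        funext x
        rcases eq_or_ne x j1 with hx1 | hx1
        · subst hx1
          rw [Function.update_of_ne h12, Function.update_self]
          rw [Function.comp_apply, hσ1, Function.update_self, hw1]
        rcases eq_or_ne x j2 with hx2 | hx2
        · subst hx2
          rw [Function.update_self, Function.comp_apply, hσ2,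
            Function.update_of_ne h12, Function.update_self, hw2]
        · rw [Function.update_of_ne hx2, Function.update_of_ne hx1]
          have hsx1 : σ x ≠ j2 := by
            rw [← hσ1]; exact fun h => hx1 (σ.injective h)
          have hsx2 : σ x ≠ j1 := by
            rw [← hσ2]; exact fun h => hx2 (σ.injective h)
          rw [Function.comp_apply, Function.update_of_ne hsx1,
            Function.update_of_ne hsx2]
          rw [hw]
          rfl
      calc Θ (Function.update v j0 ((φ * ψ) (v j0)))
          = Θ (Function.update (Function.update v j1 (φ (v j1))) j2 (ψ (v j2))) :=
            hK φ hφ ψ hψ v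
        _ = Θ (Function.update (Function.update w j1 (ψ (w j1))) j2 (φ (w j2))) := by
            rw [hcompat]; exact (hsymm σ _).symm
        _ = Θ (Function.update w j0 ((ψ * φ) (w j0))) := (hK ψ hψ φ hφ w).symm
        _ = Θ (Function.update v j0 ((ψ * φ) (v j0))) := by
            have : Function.update w j0 ((ψ * φ) (w j0))
                = (Function.update v j0 ((ψ * φ) (v j0))) ∘ σ := by
              have hs0' : σ.symm j0 = j0 := by rw [Equiv.symm_apply_eq, hσ0]
              rw [hw0, hw, Function.update_comp_equiv, hs0']
            rw [this]
            exact hsymm σ _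
    have hx : ∀ x : V, (φ * ψ) x - (ψ * φ) x = 0 := by
      intro x
      apply hzero
      intro v
      have h1 := hmain (Function.update v ⟨0, by omega⟩ x)
      rw [Function.update_self, Function.update_idem, Function.update_idem] at h1
      rw [MultilinearMap.map_update_sub, h1, sub_self]
    ext x
    have := hx x
    rw [sub_eq_zero] at this
    exact this
  -- square-zero elements of the center vanish
  have hsq : ∀ φ ∈ ZS, φ * φ = 0 → φ = 0 := by
    intro φ hφ hφ2
    ext x
    rw [LinearMap.zero_apply]
    apply hsmooth (φ x)
    intro w
    set j0 : Fin d := ⟨0, by omega⟩ with hj0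
    set j1 : Fin d := ⟨1, by omega⟩ with hj1
    set jl : Fin d := ⟨d - 1, by omega⟩ with hjl
    set m : Fin d → V := Function.update (fun _ => φ x) jl w with hm
    have hmj0 : m j0 = φ x := Function.update_of_ne h0l _ _
    have hmj1 : m j1 = φ x := Function.update_of_ne h1l _ _
    set m1 : Fin d → V := Function.update m j0 x with hm1
    have hm1j1 : m1 j1 = φ x := by
      rw [hm1, Function.update_of_ne (Ne.symm h01), hmj1]
    calc Θ m = Θ (Function.update m1 j0 (φ (m1 j0))) := by
          rw [hm1, Function.update_self, Function.update_idem, ← hmj0,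
            Function.update_eq_self]
      _ = Θ (Function.update m1 j1 (φ (m1 j1))) := hcen φ hφ m1
      _ = 0 := by
          rw [hm1j1, show φ (φ x) = (φ * φ) x from rfl, hφ2,
            LinearMap.zero_apply]
          exact Θ.map_update_zero m1 j1
  -- the center as a commutative subalgebra
  let Zalg : Subalgebra ℂ (Module.End ℂ V) :=
    ZS.toSubalgebra h1mem (fun x y hx hy => hmulmem x hx y hy)
  have hmemZ : ∀ x : Module.End ℂ V, x ∈ Zalg ↔ x ∈ ZS := fun x =>
    Submodule.mem_toSubalgebra
  letI instCR : CommRing ↥Zalg :=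
    { (inferInstance : Ring ↥Zalg) with
      mul_comm := fun a b =>
        Subtype.ext (hcomm a.1 ((hmemZ _).mp a.2) b.1 ((hmemZ _).mp b.2)) }
  haveI : IsReduced ↥Zalg := by
    constructor
    intro x hx
    obtain ⟨k, hk⟩ := hx
    refine aux_sq_zero ?_ k x hk
    intro y hy
    apply Subtype.ext
    apply hsq y.1 ((hmemZ _).mp y.2)
    simpa using congrArg Subtype.val hy
  let ℓ : ↥ZS ≃ₗ[ℂ] ↥Zalg :=
    { toFun := fun x => ⟨x.1, (hmemZ _).mpr x.2⟩
      invFun := fun x => ⟨x.1, (hmemZ _).mp x.2⟩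
      map_add' := fun _ _ => rfl
      map_smul' := fun _ _ => rfl
      left_inv := fun _ => rfl
      right_inv := fun _ => rfl }
  haveI : FiniteDimensional ℂ ↥Zalg := ℓ.finiteDimensional
  have hfr : finrank ℂ ↥ZS = finrank ℂ ↥Zalg := ℓ.finrank_eq
  obtain ⟨e0⟩ := aux_pi_equiv ↥Zalg
  rw [hfr]
  -- the idempotents
  let E : Fin (finrank ℂ ↥Zalg) → Module.End ℂ V := fun i =>
    ((e0.symm (Pi.single i 1) : ↥Zalg) : Module.End ℂ V)
  have hEmem : ∀ i, E i ∈ ZS := fun i => (hmemZ _).mp (e0.symm (Pi.single i 1)).2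
  have hsingle : ∀ i j : Fin (finrank ℂ ↥Zalg),
      (Pi.single i 1 : Fin (finrank ℂ ↥Zalg) → ℂ) * Pi.single j 1
        = if i = j then Pi.single i 1 else 0 := by
    intro i j
    rcases eq_or_ne i j with h | h
    · subst h
      rw [if_pos rfl]
      funext x
      rcases eq_or_ne x i with hx | hx
      · subst hx; simp
      · simp [Pi.single_apply, hx]
    · rw [if_neg h]
      funext x
      rcases eq_or_ne x i with hx | hx
      · subst hx; simp [Pi.single_apply, Ne.symm h]
      · simp [Pi.single_apply, hx]
  have hEmul0 : ∀ i j, i ≠ j → E i * E j = 0 := by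
    intro i j hij
    have : E i * E j
        = ((e0.symm (Pi.single i 1) * e0.symm (Pi.single j 1) : ↥Zalg) :
            Module.End ℂ V) := rfl
    rw [this, ← map_mul, hsingle, if_neg hij, map_zero]
    rfl
  have hEidem : ∀ i, E i * E i = E i := by
    intro i
    have : E i * E i
        = ((e0.symm (Pi.single i 1) * e0.symm (Pi.single i 1) : ↥Zalg) :
            Module.End ℂ V) := rfl
    rw [this, ← map_mul, hsingle, if_pos rfl]
  have hEne : ∀ i, E i ≠ 0 := by
    intro i h
    have h1 : (e0.symm (Pi.single i 1) : ↥Zalg) = 0 := Subtype.ext h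
    have h2 : (Pi.single i 1 : Fin (finrank ℂ ↥Zalg) → ℂ) = 0 := by
      have := congrArg e0 h1
      rwa [AlgEquiv.apply_symm_apply, map_zero] at this
    have := congrFun h2 i
    simp at this
  have hvex : ∀ i, ∃ x : V, E i x ≠ 0 := by
    intro i
    by_contra h
    push_neg at h
    exact hEne i (LinearMap.ext fun x => (h x).trans rfl)
  choose vv hvv using hvex
  have hLI : LinearIndependent ℂ (fun i => E i (vv i)) := by
    rw [Fintype.linearIndependent_iff]
    intro g hg j
    have h1 : E j (∑ i, g i • E i (vv i)) = 0 := by rw [hg, map_zero]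
    rw [map_sum] at h1
    have h2 : ∀ i, E j (g i • E i (vv i)) = g i • (E j * E i) (vv i) := by
      intro i
      rw [map_smul, Module.End.mul_apply]
    simp_rw [h2] at h1
    rw [Finset.sum_eq_single j] at h1
    · rw [hEidem] at h1
      rcases smul_eq_zero.mp h1 with h | h
      · exact h
      · exact absurd h (hvv j)
    · intro i _ hij
      rw [hEmul0 j i (Ne.symm hij), LinearMap.zero_apply, smul_zero]
    · intro h
      exact absurd (Finset.mem_univ j) h
  have hdim_le : finrank ℂ ↥Zalg ≤ n := by
    have := hLI.fintype_card_le_finrank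
    rwa [Fintype.card_fin, hn] at this
  refine ⟨?_, hdim_le, ?_⟩
  · -- Part 1: the algebra isomorphism with ℂ × ⋯ × ℂ
    refine ⟨fun φ => if h : φ ∈ ZS then e0 ⟨φ, (hmemZ φ).mpr h⟩ else 0, ?_, ?_, ?_, ?_, ?_⟩
    · refine ⟨fun φ _ => Set.mem_univ _, ?_, ?_⟩
      · intro φ hφ ψ hψ heq
        simp only [SetLike.mem_coe] at hφ hψ
        dsimp only at heq
        rw [dif_pos hφ, dif_pos hψ] at heq
        exact congrArg Subtype.val (e0.injective heq)
      · intro y _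
        refine ⟨(e0.symm y).1, ?_, ?_⟩
        · exact (hmemZ _).mp (e0.symm y).2
        · dsimp only
          rw [dif_pos ((hmemZ _).mp (e0.symm y).2)]
          rw [show (⟨(e0.symm y).1, (hmemZ _).mpr ((hmemZ _).mp (e0.symm y).2)⟩ : ↥Zalg)
              = e0.symm y from Subtype.ext rfl]
          exact e0.apply_symm_apply y
    · intro φ hφ ψ hψ
      dsimp only
      rw [dif_pos (ZS.add_mem hφ hψ), dif_pos hφ, dif_pos hψ]
      rw [show (⟨φ + ψ, (hmemZ _).mpr (ZS.add_mem hφ hψ)⟩ : ↥Zalg)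
          = ⟨φ, (hmemZ φ).mpr hφ⟩ + ⟨ψ, (hmemZ ψ).mpr hψ⟩ from rfl, map_add]
    · intro c φ hφ
      dsimp only
      rw [dif_pos (ZS.smul_mem c hφ), dif_pos hφ]
      rw [show (⟨c • φ, (hmemZ _).mpr (ZS.smul_mem c hφ)⟩ : ↥Zalg)
          = c • ⟨φ, (hmemZ φ).mpr hφ⟩ from rfl]
      exact e0.toLinearEquiv.map_smul c _
    · intro φ hφ ψ hψ
      dsimp only
      rw [dif_pos (hmulmem φ hφ ψ hψ), dif_pos hφ, dif_pos hψ]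
      rw [show (⟨φ * ψ, (hmemZ _).mpr (hmulmem φ hφ ψ hψ)⟩ : ↥Zalg)
          = ⟨φ, (hmemZ φ).mpr hφ⟩ * ⟨ψ, (hmemZ ψ).mpr hψ⟩ from rfl, map_mul]
    · dsimp only
      rw [dif_pos h1mem]
      rw [show (⟨1, (hmemZ _).mpr h1mem⟩ : ↥Zalg) = 1 from rfl, map_one]
  · constructor
    · -- diagonalizable → the center has dimension n
      rintro ⟨β, hβ⟩
      refine le_antisymm hdim_le ?_
      have hexp : ∀ v : Fin d → V, Θ v
          = ∑ p : Fin d → Fin n, (∏ s, β.repr (v s) (p s)) • Θ (fun s => β (p s)) := by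
        intro v
        have h1 : Θ v = Θ (fun s => ∑ i : Fin n, β.repr (v s) i • β i) := by
          congr 1
          funext s
          exact (β.sum_repr (v s)).symm
        rw [h1, MultilinearMap.map_sum]
        exact Finset.sum_congr rfl fun p _ => Θ.map_smul_univ _ _
      have hT : ∀ v : Fin d → V, Θ v
          = ∑ i : Fin n, (∏ s, β.repr (v s) i) • Θ (fun _ => β i) := by
        intro v
        rw [hexp v]
        calc ∑ p : Fin d → Fin n, (∏ s, β.repr (v s) (p s)) • Θ (fun s => β (p s))
            = ∑ p ∈ (Finset.univ.image (fun i : Fin n => (fun _ : Fin d => i))),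
                (∏ s, β.repr (v s) (p s)) • Θ (fun s => β (p s)) := by
              refine (Finset.sum_subset (Finset.subset_univ _) ?_).symm
              intro p _ hp
              have h0 : ¬ (∀ s s' : Fin d, p s = p s') := by
                intro hall
                apply hp
                refine Finset.mem_image.mpr ⟨p ⟨0, by omega⟩, Finset.mem_univ _, ?_⟩
                funext s
                exact hall ⟨0, by omega⟩ s
              rw [hβ p h0, smul_zero]
          _ = ∑ i : Fin n, (∏ s, β.repr (v s) i) • Θ (fun _ => β i) := by
              rw [Finset.sum_image (fun a _ b _ hab => congrFun hab ⟨0, by omega⟩)]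
      let π : Fin n → Module.End ℂ V := fun q => LinearMap.smulRight (β.coord q) (β q)
      have hπapp : ∀ q (x : V), π q x = β.repr x q • β q := fun q x => rfl
      have hrepr : ∀ q (x : V) (i : Fin n), β.repr (π q x) i
          = (β.repr x q) * (if i = q then 1 else 0) := by
        intro q x i
        rw [hπapp, map_smul, Basis.repr_self, Finsupp.smul_apply, Finsupp.single_apply]
        rcases eq_or_ne i q with h | h
        · subst h; simp
        · simp [h, Ne.symm h]
      have hπcoeff : ∀ q (v : Fin d → V) (r : Fin d),
          Θ (Function.update v r (π q (v r)))
            = (∏ s, β.repr (v s) q) • Θ (fun _ => β q) := by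
        intro q v r
        rw [hT]
        have hupd : ∀ i : Fin n,
            (fun s => β.repr ((Function.update v r (π q (v r))) s) i)
              = Function.update (fun s => β.repr (v s) i) r (β.repr (π q (v r)) i) := by
          intro i
          funext s
          rcases eq_or_ne s r with h | h
          · subst h; rw [Function.update_self, Function.update_self]
          · rw [Function.update_of_ne h, Function.update_of_ne h]
        calc ∑ i : Fin n,
              (∏ s, β.repr ((Function.update v r (π q (v r))) s) i) • Θ (fun _ => β i)
            = ∑ i : Fin n, ((β.repr (π q (v r)) i)
                * ∏ s ∈ Finset.univ \ {r}, β.repr (v s) i) • Θ (fun _ => β i) := by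
              refine Finset.sum_congr rfl fun i _ => ?_
              congr 1
              rw [show (∏ s, β.repr ((Function.update v r (π q (v r))) s) i)
                  = ∏ s, (Function.update (fun s => β.repr (v s) i) r
                      (β.repr (π q (v r)) i)) s from by rw [← hupd i]]
              exact Finset.prod_update_of_mem (Finset.mem_univ r) _ _
          _ = (∏ s, β.repr (v s) q) • Θ (fun _ => β q) := by
              rw [Finset.sum_eq_single q]
              · rw [hrepr, if_pos rfl, mul_one,
                  show β.repr (v r) q * ∏ s ∈ Finset.univ \ {r}, β.repr (v s) q
                      = ∏ s, β.repr (v s) q from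
                    (Finset.prod_eq_mul_prod_sdiff_singleton_of_mem (Finset.mem_univ r)
                      (fun s => β.repr (v s) q)).symm]
              · intro i _ hiq
                rw [hrepr, if_neg hiq, mul_zero, zero_mul, zero_smul]
              · intro h; exact absurd (Finset.mem_univ q) h
      have hπmem : ∀ q, π q ∈ ZS := by
        intro q
        rw [hZS]
        intro v
        rw [hπcoeff q v, hπcoeff q v]
      have hπLI : LinearIndependent ℂ (fun q : Fin n => (⟨π q, hπmem q⟩ : ↥ZS)) := by
        rw [Fintype.linearIndependent_iff]
        intro g hg q
        have h1 : (∑ i, g i • π i) = 0 := by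
          have := congrArg Subtype.val hg
          simpa using this
        have h2 : ∑ i, g i • (π i (β q)) = 0 := by
          have := LinearMap.congr_fun h1 (β q)
          simpa using this
        rw [Finset.sum_eq_single q] at h2
        · have hπq : π q (β q) = β q := by
            rw [hπapp, Basis.repr_self, Finsupp.single_apply, if_pos rfl, one_smul]
          rw [hπq] at h2
          rcases smul_eq_zero.mp h2 with h | h
          · exact h
          · exact absurd h (β.ne_zero q)
        · intro i _ hiq
          have hπi : π i (β q) = 0 := by
            rw [hπapp, Basis.repr_self, Finsupp.single_apply, if_neg (Ne.symm hiq), zero_smul]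
          rw [hπi, smul_zero]
        · intro h; exact absurd (Finset.mem_univ q) h
      have hge := hπLI.fintype_card_le_finrank
      rwa [Fintype.card_fin, hfr] at hge
    · -- the center has dimension n → diagonalizable
      intro hmn
      rcases Nat.eq_zero_or_pos n with hn0 | hnpos
      · subst hn0
        haveI : Subsingleton V := finrank_zero_iff.mp hn
        exact ⟨Basis.empty V, fun j _ => (j ⟨0, by omega⟩).elim0⟩
      · haveI : Nonempty (Fin n) := Fin.pos_iff_nonempty.mp hnpos
        let c : Fin n → Fin (finrank ℂ ↥Zalg) := fun i => (finCongr hmn).symm i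
        have hcinj : Function.Injective c := fun a b h => by
          simpa [c] using congrArg (finCongr hmn) h
        have hwLI : LinearIndependent ℂ (fun i : Fin n => E (c i) (vv (c i))) := by
          have := hLI.comp c hcinj
          exact this
        have hcard : Fintype.card (Fin n) = finrank ℂ V := by
          rw [Fintype.card_fin, hn]
        let β : Basis (Fin n) ℂ V := basisOfLinearIndependentOfCardEqFinrank hwLI hcard
        have hβw : ∀ i, β i = E (c i) (vv (c i)) := fun i =>
          congrFun (coe_basisOfLinearIndependentOfCardEqFinrank hwLI hcard) i
        refine ⟨β, ?_⟩
        intro j hj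
        push_neg at hj
        obtain ⟨s, s', hjss⟩ := hj
        have hss : s ≠ s' := fun h => hjss (by rw [h])
        have hid : E (c (j s)) (β (j s)) = β (j s) := by
          rw [hβw (j s), ← Module.End.mul_apply, hEidem]
        have h1 : Θ (fun t => β (j t))
            = Θ (Function.update (fun t => β (j t)) s
                (E (c (j s)) ((fun t => β (j t)) s))) := by
          rw [show ((fun t => β (j t)) s) = β (j s) from rfl, hid,
            Function.update_eq_self]
        rw [h1, hmove (E (c (j s))) (hEmem _) s s' hss]
        have h0 : E (c (j s)) ((fun t => β (j t)) s') = 0 := by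
          rw [show ((fun t => β (j t)) s') = β (j s') from rfl, hβw (j s'),
            ← Module.End.mul_apply, hEmul0 _ _ (fun h => hjss (hcinj h)),
            LinearMap.zero_apply]
        rw [h0]
        exact Θ.map_update_zero _ s'
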